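/- (Hahn convolution identity) For λ₁, λ₂ ∈ ℂ with λ₁, λ₂ ∉ {0,−1,...,−(N−1)} and λ₁+λ₂ ∉ {0,...,−(2N−2)}, and for 0 ≤ l ≤ N, the polynomial identity (x+y)^N P_l^{λ₁,λ₂}((y−x)/(x+y)) = ((λ₁)_l / l!) ∑_{k=0}^{N} binom(N,k) Q_{l,k} x^k y^{N−k} holds in ℂ[x,y], where Q_{l,k} = ₃F₂(−l, l+λ₁+λ₂−1, −k; λ₁, −N; 1). -/

import Mathlib

open Finset Polynomial

/-- Rising Pochhammer symbol `(x)_m = x(x+1)⋯(x+m-1)` over `ℂ`. -/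
noncomputable def poch (x : ℂ) (m : ℕ) : ℂ := (ascPochhammer ℂ m).eval x

/-- Jacobi polynomial `P_l^{a,b}(x) = ((a)_l/l!) ₂F₁(-l, l+a+b-1; a; (1-x)/2)`. -/
noncomputable def jacobiP (l : ℕ) (a b : ℂ) : Polynomial ℂ :=
  C (poch a l / (l.factorial : ℂ)) *
    ∑ n ∈ range (l + 1),
      C (poch (-(l : ℂ)) n * poch ((l : ℂ) + a + b - 1) n / (poch a n * (n.factorial : ℂ))) *
        (C (2⁻¹ : ℂ) * (1 - X)) ^ n

/-- Homogenisation: for a one-variable polynomial `q` and `n ≥ deg q`, the polynomial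
`s^n q(d/s)` written as `∑ᵢ (coeff q i) dⁱ s^{n-i}`; with `s = x+y`, `d = y-x` this is
`(x+y)^n q((y-x)/(x+y)) ∈ ℂ[x,y]`. -/
noncomputable def homog2 (q : Polynomial ℂ) (n : ℕ) : MvPolynomial (Fin 2) ℂ :=
  ∑ i ∈ range (n + 1),
    MvPolynomial.C (q.coeff i) * (MvPolynomial.X 1 - MvPolynomial.X 0) ^ i *
      (MvPolynomial.X 0 + MvPolynomial.X 1) ^ (n - i)

/-- Value `Q_{l,k}` of the Hahn polynomial:
`₃F₂(-l, l+λ₁+λ₂-1, -k; λ₁, -N; 1)` as a terminating sum. -/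
noncomputable def hahnQ (lam1 lam2 : ℂ) (N l k : ℕ) : ℂ :=
  ∑ n ∈ range (l + 1),
    poch (-(l : ℂ)) n * poch ((l : ℂ) + lam1 + lam2 - 1) n * poch (-(k : ℂ)) n /
      (poch lam1 n * poch (-(N : ℂ)) n * (n.factorial : ℂ))


lemma poch_neg_nat (k n : ℕ) : poch (-(k:ℂ)) n = (-1)^n * (k.descFactorial n : ℂ) := by
  rw [poch, ascPochhammer_eval_neg_eq_descPochhammer, descPochhammer_eval_eq_descFactorial]

lemma poch_neg_eq_zero {k n : ℕ} (h : k < n) : poch (-(k:ℂ)) n = 0 :=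
  ascPochhammer_eval_neg_coe_nat_of_lt h

lemma poch_neg_ne_zero {n N : ℕ} (h : n ≤ N) : poch (-(N:ℂ)) n ≠ 0 := by
  rw [poch_neg_nat]
  have : N.descFactorial n ≠ 0 := by
    simp [Nat.descFactorial_eq_zero_iff_lt]; omega
  intro hc
  rcases mul_eq_zero.1 hc with h1 | h2
  · exact (pow_ne_zero n (neg_ne_zero.2 one_ne_zero)) h1
  · exact this (Nat.cast_eq_zero.1 h2)

lemma key_nat {n j N : ℕ} (h : n + j ≤ N) :
    N.choose (n+j) * (n+j).descFactorial n = (N-n).choose j * N.descFactorial n := by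
  rw [Nat.descFactorial_eq_factorial_mul_choose, Nat.descFactorial_eq_factorial_mul_choose]
  have h2 := Nat.choose_mul (n := N) (Nat.le_add_right n j)
  rw [Nat.add_sub_cancel_left] at h2
  calc N.choose (n+j) * (n.factorial * (n+j).choose n)
      = (N.choose (n+j) * (n+j).choose n) * n.factorial := by ring
    _ = (N.choose n * (N-n).choose j) * n.factorial := by rw [h2]
    _ = (N-n).choose j * (n.factorial * N.choose n) := by ring

lemma key_c {n j N : ℕ} (h : n + j ≤ N) :
    (N.choose (n+j) : ℂ) * poch (-((n+j : ℕ):ℂ)) n = ((N-n).choose j : ℂ) * poch (-(N:ℂ)) n := by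
  rw [poch_neg_nat, poch_neg_nat]
  have := congrArg (Nat.cast : ℕ → ℂ) (key_nat h)
  push_cast at this
  linear_combination ((-1:ℂ)^n) * this

lemma scalar_step (lam1 lam2 : ℂ) (l N n j : ℕ) (h : n + j ≤ N) :
    (N.choose (n+j) : ℂ) *
      (poch (-(l:ℂ)) n * poch ((l:ℂ)+lam1+lam2-1) n * poch (-((n+j:ℕ):ℂ)) n /
        (poch lam1 n * poch (-(N:ℂ)) n * (n.factorial:ℂ)))
    = (poch (-(l:ℂ)) n * poch ((l:ℂ)+lam1+lam2-1) n / (poch lam1 n * (n.factorial:ℂ))) *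
      ((N-n).choose j : ℂ) := by
  have hPn := poch_neg_ne_zero (le_trans (Nat.le_add_right n j) h)
  have key := key_c h
  set P := poch (-((n+j:ℕ):ℂ)) n with hP
  set Pn := poch (-(N:ℂ)) n with hPN
  set u := poch (-(l:ℂ)) n * poch ((l:ℂ)+lam1+lam2-1) n with hu
  set w := poch lam1 n * (n.factorial:ℂ) with hw
  have hden : poch lam1 n * Pn * (n.factorial:ℂ) = w * Pn := by
    rw [hw]; ring
  rw [hden]
  calc (N.choose (n+j) : ℂ) * (u * P / (w * Pn))
      = (u * ((N.choose (n+j) : ℂ) * P)) / (w * Pn) := by ring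
    _ = (u * (((N-n).choose j : ℂ)) * Pn) / (w * Pn) := by rw [key]; ring_nf
    _ = u * (((N-n).choose j : ℂ)) / w := mul_div_mul_right _ _ hPn
    _ = u / w * (((N-n).choose j : ℂ)) := by rw [mul_div_right_comm]

lemma homog2_C_mul (a : ℂ) (q : Polynomial ℂ) (N : ℕ) :
    homog2 (C a * q) N = MvPolynomial.C a * homog2 q N := by
  unfold homog2
  rw [Finset.mul_sum]
  refine Finset.sum_congr rfl fun i _ => ?_
  rw [coeff_C_mul, map_mul]; ring

lemma homog2_sum {ι : Type*} (s : Finset ι) (f : ι → Polynomial ℂ) (N : ℕ) :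
    homog2 (∑ i ∈ s, f i) N = ∑ i ∈ s, homog2 (f i) N := by
  unfold homog2
  rw [Finset.sum_comm]
  refine Finset.sum_congr rfl fun i _ => ?_
  rw [finset_sum_coeff, map_sum, Finset.sum_mul, Finset.sum_mul]

-- expansion of (C 2⁻¹ * (1 - X))^n as explicit monomial sum
lemma r_pow (n : ℕ) :
    (C (2⁻¹ : ℂ) * (1 - X)) ^ n
      = ∑ k ∈ range (n+1), C ((2⁻¹:ℂ)^n * ((-1)^k * (n.choose k : ℂ))) * X ^ k := by
  have h := add_pow (-X : Polynomial ℂ) 1 n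
  rw [neg_add_eq_sub] at h
  rw [mul_pow, ← C_pow, h, Finset.mul_sum]
  refine Finset.sum_congr rfl fun k _ => ?_
  simp only [map_mul, map_pow, map_neg, map_one, map_natCast, one_pow, mul_one]
  ring

lemma coeff_r_pow (n i : ℕ) :
    ((C (2⁻¹ : ℂ) * (1 - X)) ^ n).coeff i = (2⁻¹:ℂ)^n * ((-1)^i * (n.choose i : ℂ)) := by
  rw [r_pow, finset_sum_coeff]
  simp only [coeff_C_mul, coeff_X_pow, mul_ite, mul_one, mul_zero]
  rw [Finset.sum_ite_eq (range (n+1)) i (fun k => (2⁻¹:ℂ)^n * ((-1)^k * (n.choose k : ℂ)))]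
  by_cases hi : i ∈ range (n+1)
  · rw [if_pos hi]
  · rw [if_neg hi]
    rw [Nat.choose_eq_zero_of_lt (by simp only [mem_range] at hi; omega)]
    simp

lemma homog2_r_pow {n N : ℕ} (h : n ≤ N) :
    homog2 ((C (2⁻¹ : ℂ) * (1 - X)) ^ n) N
      = MvPolynomial.X 0 ^ n * (MvPolynomial.X 0 + MvPolynomial.X 1) ^ (N - n) := by
  unfold homog2
  set x : MvPolynomial (Fin 2) ℂ := MvPolynomial.X 0
  set y : MvPolynomial (Fin 2) ℂ := MvPolynomial.X 1
  rw [← Finset.sum_subset (Finset.range_subset_range.2 (by omega : n + 1 ≤ N + 1))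
    (fun i _ hi => by
      simp only [mem_range, not_lt] at hi
      rw [coeff_r_pow, Nat.choose_eq_zero_of_lt (by omega)]
      simp)]
  have key : ∀ i ∈ range (n+1),
      MvPolynomial.C (((C (2⁻¹ : ℂ) * (1 - X)) ^ n).coeff i) * (y - x) ^ i * (x + y) ^ (N - i)
        = (MvPolynomial.C (2⁻¹:ℂ))^n * ((-(y-x))^i * (x+y)^(n-i) * (n.choose i : MvPolynomial (Fin 2) ℂ)) * (x+y)^(N-n) := by
    intro i hi
    simp only [mem_range] at hi
    rw [coeff_r_pow, show N - i = (n - i) + (N - n) by omega, pow_add]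
    simp only [map_mul, map_pow, map_neg, map_one, map_natCast]
    rw [neg_pow (y - x) i]
    ring
  rw [Finset.sum_congr rfl key, ← Finset.sum_mul, ← Finset.mul_sum, ← add_pow (-(y-x)) (x+y) n]
  have h2 : -(y-x) + (x+y) = 2 * x := by ring
  have h1 : (MvPolynomial.C (2⁻¹:ℂ) : MvPolynomial (Fin 2) ℂ) * 2 = 1 := by
    rw [show ((2:MvPolynomial (Fin 2) ℂ)) = MvPolynomial.C (2:ℂ) from (map_ofNat _ 2).symm,
      ← map_mul]
    norm_num
  rw [h2, mul_pow, ← mul_assoc, ← mul_pow, h1, one_pow, one_mul]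

theorem hahn_convolution (lam1 lam2 : ℂ) (N : ℕ) (hN : 0 < N) (l : ℕ) (hl : l ≤ N)
    (h1 : ∀ j : ℕ, j < N → lam1 ≠ -(j : ℂ))
    (h2 : ∀ j : ℕ, j < N → lam2 ≠ -(j : ℂ))
    (h12 : ∀ j : ℕ, j ≤ 2 * N - 2 → lam1 + lam2 ≠ -(j : ℂ)) :
    homog2 (jacobiP l lam1 lam2) N =
      MvPolynomial.C (poch lam1 l / (l.factorial : ℂ)) *
        ∑ k ∈ range (N + 1),
          MvPolynomial.C ((N.choose k : ℂ) * hahnQ lam1 lam2 N l k) *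
            MvPolynomial.X 0 ^ k * MvPolynomial.X 1 ^ (N - k) := by
  unfold jacobiP
  rw [homog2_C_mul, homog2_sum]
  congr 1
  -- rewrite each term on the left
  have lhs_eq : ∀ n ∈ range (l+1),
      homog2 (C (poch (-(l : ℂ)) n * poch ((l : ℂ) + lam1 + lam2 - 1) n /
          (poch lam1 n * (n.factorial : ℂ))) * (C (2⁻¹ : ℂ) * (1 - X)) ^ n) N
        = MvPolynomial.C (poch (-(l : ℂ)) n * poch ((l : ℂ) + lam1 + lam2 - 1) n /
            (poch lam1 n * (n.factorial : ℂ))) *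
          (MvPolynomial.X 0 ^ n * (MvPolynomial.X 0 + MvPolynomial.X 1) ^ (N - n)) := by
    intro n hn
    rw [homog2_C_mul, homog2_r_pow (by simp only [mem_range] at hn; omega)]
  rw [Finset.sum_congr rfl lhs_eq]
  -- expand hahnQ on the right and swap sums
  unfold hahnQ
  conv_rhs =>
    enter [2, k]
    rw [Finset.mul_sum, map_sum, Finset.sum_mul, Finset.sum_mul]
  rw [Finset.sum_comm]
  refine Finset.sum_congr rfl fun n hn => ?_
  simp only [mem_range] at hn
  have hnN : n ≤ N := by omega
  -- restrict the k-sum to k ≥ n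
  rw [← Finset.sum_subset (show Finset.Ico n (N+1) ⊆ range (N+1) by
        intro k hk; simp only [mem_Ico] at hk; simp only [mem_range]; omega)
      (fun k hk hk' => by
        simp only [mem_range] at hk
        simp only [mem_Ico, not_and, not_lt] at hk'
        have hkn : k < n := by omega
        simp [poch_neg_eq_zero hkn])]
  rw [Finset.sum_Ico_eq_sum_range]
  rw [show N + 1 - n = N - n + 1 by omega]
  rw [add_pow (MvPolynomial.X 0 : MvPolynomial (Fin 2) ℂ) (MvPolynomial.X 1) (N-n), Finset.mul_sum, Finset.mul_sum]
  refine Finset.sum_congr rfl fun j hj => ?_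
  simp only [mem_range] at hj
  have hjN : n + j ≤ N := by omega
  rw [scalar_step lam1 lam2 l N n j hjN]
  rw [map_mul, map_natCast, show N - (n + j) = N - n - j by omega, pow_add]
  ring
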